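/- Let G be a simple graph on a finite vertex set V with |V| = n ≥ 1 and let k, u : V → ℕ. Let σ : Fin n ≃ V be a strong elimination ordering of G, writing v_i = σ(i): that is, for all indices i ≤ j ≤ l in Fin n, (a) any two vertices of N[v_i] ∩ {v_i, …, v_n} are adjacent or equal (v_i is simplicial in the subgraph induced on {v_i, …, v_n}), and (b) if v_j ∈ N[v_i] and v_l ∈ N[v_i], then N[v_j] ∩ {v_i, …, v_n} ⊆ N[v_l] ∩ {v_i, …, v_n}. Suppose f : Fin n → ℕ satisfies, for every i, the greedy recursion f(i) = min( u(v_i), min_{w ∈ N[v_i]} ( k(w) ∸ ∑_{j < i, v_j ∈ N[w]} f(j) ) ), where ∸ is truncated subtraction in ℕ. Then ∑_{i} f(i) = L_{k,u}(G), i.e., the greedy function attains the maximum weight among all (k,u)-packing functions of G. -/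
import Mathlib


open Classical Finset

/-- The closed neighborhood `N[v]` of `v` in `G`, as a finset. -/
noncomputable def closedNbhd {V : Type*} [Fintype V] (G : SimpleGraph V) (v : V) : Finset V :=
  Finset.univ.filter (fun w => G.Adj v w ∨ w = v)

lemma mem_closedNbhd_self {V : Type*} [Fintype V] (G : SimpleGraph V) (v : V) :
    v ∈ closedNbhd G v := by simp [closedNbhd]

/-- `f` is a `(k,u)`-dominating function of `G`. -/
def IsDomFn {V : Type*} [Fintype V] (G : SimpleGraph V) (k u f : V → ℕ) : Prop :=
  ∀ v, f v ≤ u v ∧ k v ≤ ∑ w ∈ closedNbhd G v, f w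

/-- `f` is a `(k,u)`-packing function of `G`. -/
def IsPackFn {V : Type*} [Fintype V] (G : SimpleGraph V) (k u f : V → ℕ) : Prop :=
  ∀ v, f v ≤ u v ∧ ∑ w ∈ closedNbhd G v, f w ≤ k v

/-- `γ_{k,u}(G)`: minimum weight of a `(k,u)`-dominating function. -/
noncomputable def gammaKU {V : Type*} [Fintype V] (G : SimpleGraph V) (k u : V → ℕ) : ℕ :=
  sInf {s | ∃ f, IsDomFn G k u f ∧ s = ∑ v, f v}

/-- `L_{k,u}(G)`: maximum weight of a `(k,u)`-packing function. -/
noncomputable def LKU {V : Type*} [Fintype V] (G : SimpleGraph V) (k u : V → ℕ) : ℕ :=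
  sSup {s | ∃ f, IsPackFn G k u f ∧ s = ∑ v, f v}

lemma mem_closedNbhd_comm {V : Type*} [Fintype V] (G : SimpleGraph V) {v w : V} :
    w ∈ closedNbhd G v ↔ v ∈ closedNbhd G w := by
  simp [closedNbhd, G.adj_comm, eq_comm]

lemma aux_sum_split {n : ℕ} (S : Finset (Fin n)) (i : Fin n) (g : Fin n → ℕ) :
    ∑ j ∈ S, g j
      = (∑ j ∈ S.filter (fun j => j < i), g j)
        + ((if i ∈ S then g i else 0) + ∑ j ∈ S.filter (fun j => i < j), g j) := by
  classical
  rw [← Finset.sum_filter_add_sum_filter_not S (fun j => j < i) g]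
  congr 1
  have h1 : S.filter (fun j => ¬ j < i)
      = S.filter (fun j => j = i) ∪ S.filter (fun j => i < j) := by
    ext j
    simp only [Finset.mem_filter, Finset.mem_union]
    constructor
    · rintro ⟨hs, h⟩
      rcases lt_or_eq_of_le (le_of_not_gt h) with h' | h'
      · exact Or.inr ⟨hs, h'⟩
      · exact Or.inl ⟨hs, h'.symm⟩
    · rintro (⟨hs, h⟩ | ⟨hs, h⟩)
      · exact ⟨hs, by simp [h]⟩
      · exact ⟨hs, not_lt.mpr h.le⟩
  rw [h1, Finset.sum_union]
  · congr 1
    rw [Finset.filter_eq']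
    split <;> simp
  · refine Finset.disjoint_left.mpr ?_
    intro a ha hb
    simp only [Finset.mem_filter] at ha hb
    exact absurd (ha.2 ▸ hb.2) (lt_irrefl i)

lemma aux_update2 {n : ℕ} (g : Fin n → ℕ) (i l : Fin n) (hne : i ≠ l) (hl : 1 ≤ g l)
    (S : Finset (Fin n)) :
    (∑ j ∈ S, (Function.update (Function.update g i (g i + 1)) l (g l - 1)) j)
        + (if l ∈ S then 1 else 0)
      = (∑ j ∈ S, g j) + (if i ∈ S then 1 else 0) := by
  classical
  have hpt : ∀ j, (Function.update (Function.update g i (g i + 1)) l (g l - 1)) j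
      + (if j = l then 1 else 0) = g j + (if j = i then 1 else 0) := by
    intro j
    by_cases hj : j = l
    · subst hj
      simp [Function.update_apply, hne.symm, (Ne.symm hne)]
      omega
    · by_cases hji : j = i
      · subst hji; simp [Function.update_apply, hj, hne]
      · simp [Function.update_apply, hj, hji]
  calc (∑ j ∈ S, (Function.update (Function.update g i (g i + 1)) l (g l - 1)) j)
        + (if l ∈ S then 1 else 0)
      = ∑ j ∈ S, ((Function.update (Function.update g i (g i + 1)) l (g l - 1)) j
          + (if j = l then 1 else 0)) := by
        rw [Finset.sum_add_distrib, Finset.sum_ite_eq' S l (fun _ => 1)]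
    _ = ∑ j ∈ S, (g j + (if j = i then 1 else 0)) := by
        exact Finset.sum_congr rfl fun j _ => hpt j
    _ = (∑ j ∈ S, g j) + (if i ∈ S then 1 else 0) := by
        rw [Finset.sum_add_distrib, Finset.sum_ite_eq' S i (fun _ => 1)]



/-- if `σ` is a strong elimination ordering of `G`, then the greedy
function attains the maximum weight `L_{k,u}(G)` among all `(k,u)`-packing functions. -/
theorem stmt_14 {V : Type*} [Fintype V] (G : SimpleGraph V) (k u : V → ℕ)
    (n : ℕ) (hn : 1 ≤ n) (σ : Fin n ≃ V)
    -- (a) each `σ i` is simplicial in the subgraph induced on `{σ i, …, σ (n-1)}`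
    (ha : ∀ i j l : Fin n, i ≤ j → j ≤ l →
      σ j ∈ closedNbhd G (σ i) → σ l ∈ closedNbhd G (σ i) →
      σ j = σ l ∨ G.Adj (σ j) (σ l))
    -- (b) for `i ≤ j ≤ l` with `σ j, σ l ∈ N[σ i]`:
    --     `N[σ j] ∩ {σ i, …} ⊆ N[σ l] ∩ {σ i, …}`
    (hb : ∀ i j l : Fin n, i ≤ j → j ≤ l →
      σ j ∈ closedNbhd G (σ i) → σ l ∈ closedNbhd G (σ i) →
      ∀ m : Fin n, i ≤ m → σ m ∈ closedNbhd G (σ j) → σ m ∈ closedNbhd G (σ l))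
    (f : Fin n → ℕ)
    (hf : ∀ i : Fin n,
      f i = min (u (σ i))
        ((closedNbhd G (σ i)).inf' ⟨σ i, mem_closedNbhd_self G (σ i)⟩
          (fun w => k w -
            ∑ j ∈ Finset.univ.filter (fun j : Fin n => j < i ∧ σ j ∈ closedNbhd G w), f j))) :
    (∑ i, f i) = LKU G k u := by
  classical
  set Nb : Fin n → Finset (Fin n) :=
    fun m => Finset.univ.filter (fun j => σ j ∈ closedNbhd G (σ m)) with hNbdef
  have hmemNb : ∀ {j m : Fin n}, j ∈ Nb m ↔ σ j ∈ closedNbhd G (σ m) := by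
    intro j m; simp [hNbdef]
  set Pack : (Fin n → ℕ) → Prop :=
    fun g => ∀ m : Fin n, g m ≤ u (σ m) ∧ ∑ j ∈ Nb m, g j ≤ k (σ m) with hPackdef
  -- transfer of neighborhood sums
  have htrans : ∀ (fV : V → ℕ) (v : V),
      ∑ w ∈ closedNbhd G v, fV w = ∑ j ∈ Nb (σ.symm v), fV (σ j) := by
    intro fV v
    have hmap : (Nb (σ.symm v)).map σ.toEmbedding = closedNbhd G v := by
      ext w
      simp [hNbdef, Finset.mem_map]
    rw [← hmap, Finset.sum_map]
    rfl
  -- basic facts about f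
  have hf_le_u : ∀ i : Fin n, f i ≤ u (σ i) := by
    intro i; rw [hf i]; exact min_le_left _ _
  have hf_le : ∀ (i : Fin n) (w : V), w ∈ closedNbhd G (σ i) →
      f i ≤ k w - ∑ j ∈ Finset.univ.filter
        (fun j : Fin n => j < i ∧ σ j ∈ closedNbhd G w), f j := by
    intro i w hw; rw [hf i]
    exact le_trans (min_le_right _ _) (Finset.inf'_le _ hw)
  have hfilter : ∀ (i m : Fin n) (g : Fin n → ℕ),
      ∑ j ∈ Finset.univ.filter (fun j : Fin n => j < i ∧ σ j ∈ closedNbhd G (σ m)), g j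
        = ∑ j ∈ (Nb m).filter (fun j => j < i), g j := by
    intro i m g
    apply Finset.sum_congr _ (fun _ _ => rfl)
    ext j; simp [hNbdef]; tauto
  -- Step A: f is a packing function
  have packF : Pack f := by
    intro m
    refine ⟨hf_le_u m, ?_⟩
    have key : ∀ t : ℕ, ∑ j ∈ (Nb m).filter (fun j : Fin n => (j : ℕ) < t), f j ≤ k (σ m) := by
      intro t
      induction t with
      | zero => simp
      | succ t ih =>
        by_cases ht : t < n
        · set i : Fin n := ⟨t, ht⟩ with hidef
          have hset : (Nb m).filter (fun j : Fin n => (j : ℕ) < t + 1)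
              = (Nb m).filter (fun j : Fin n => (j : ℕ) < t) ∪ (Nb m).filter (fun j => j = i) := by
            have hit : (i : ℕ) = t := rfl
            ext j
            simp only [Finset.mem_filter, Finset.mem_union, Fin.ext_iff, hit]
            constructor
            · rintro ⟨h1, h2⟩
              by_cases hjt : (j : ℕ) < t
              · exact Or.inl ⟨h1, hjt⟩
              · exact Or.inr ⟨h1, by omega⟩
            · rintro (⟨h1, h2⟩ | ⟨h1, h2⟩) <;> exact ⟨h1, by omega⟩
          have hdisj : Disjoint ((Nb m).filter (fun j : Fin n => (j : ℕ) < t))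
              ((Nb m).filter (fun j => j = i)) := by
            refine Finset.disjoint_left.mpr ?_
            intro a haa hab
            simp only [Finset.mem_filter] at haa hab
            rw [hab.2] at haa
            exact absurd haa.2 (by simp [hidef])
          rw [hset, Finset.sum_union hdisj]
          have heq2 : ∑ j ∈ (Nb m).filter (fun j => j = i), f j
              = if i ∈ Nb m then f i else 0 := by
            rw [Finset.filter_eq']
            split <;> simp
          rw [heq2]
          by_cases hi : i ∈ Nb m
          · rw [if_pos hi]
            have hw : σ m ∈ closedNbhd G (σ i) :=
              (mem_closedNbhd_comm G).mp (hmemNb.mp hi)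
            have h1 := hf_le i (σ m) hw
            rw [hfilter i m f] at h1
            have hfeq : ((Nb m).filter (fun j => j < i))
                = (Nb m).filter (fun j : Fin n => (j : ℕ) < t) := by
              ext j
              simp only [Finset.mem_filter, hidef, Fin.lt_def]
            rw [hfeq] at h1
            omega
          · rw [if_neg hi]; simpa using ih
        · have hset : (Nb m).filter (fun j : Fin n => (j : ℕ) < t + 1)
              = (Nb m).filter (fun j : Fin n => (j : ℕ) < t) := by
            ext j
            simp only [Finset.mem_filter]
            have := j.isLt
            constructor
            · rintro ⟨h1, h2⟩; exact ⟨h1, by omega⟩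
            · rintro ⟨h1, h2⟩; exact ⟨h1, by omega⟩
          rw [hset]; exact ih
    have : (Nb m).filter (fun j : Fin n => (j : ℕ) < n) = Nb m := by
      apply Finset.filter_true_of_mem
      intro j _; exact j.isLt
    calc ∑ j ∈ Nb m, f j = ∑ j ∈ (Nb m).filter (fun j : Fin n => (j : ℕ) < n), f j := by rw [this]
      _ ≤ k (σ m) := key n
  -- pointwise bound: any packing function agreeing with f below i satisfies g i ≤ f i
  have gle : ∀ (i : Fin n) (g : Fin n → ℕ), Pack g → (∀ j : Fin n, j < i → g j = f j) →
      g i ≤ f i := by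
    intro i g hg hag
    rw [hf i]
    apply le_min (hg i).1
    apply Finset.le_inf'
    intro w hw
    set m := σ.symm w with hm
    have hwm : σ m = w := by simp [hm]
    have hiNb : i ∈ Nb m := hmemNb.mpr (by rw [hwm]; exact (mem_closedNbhd_comm G).mp hw)
    have hsum := (hg m).2
    rw [aux_sum_split (Nb m) i g, if_pos hiNb] at hsum
    have hP : ∑ j ∈ (Nb m).filter (fun j => j < i), g j
        = ∑ j ∈ (Nb m).filter (fun j => j < i), f j :=
      Finset.sum_congr rfl fun j hj => hag j (Finset.mem_filter.mp hj).2
    rw [hP] at hsum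
    rw [← hwm, hfilter i m f]
    omega
  -- main induction: any packing function has weight at most that of f
  have main : ∀ d t : ℕ, n ≤ t + d → ∀ g : Fin n → ℕ, Pack g →
      (∀ j : Fin n, (j : ℕ) < t → g j = f j) → ∑ j, g j ≤ ∑ j, f j := by
    intro d
    induction d with
    | zero =>
      intro t hnt g _ hag
      have hall : ∀ j : Fin n, g j = f j := fun j => hag j (by have := j.isLt; omega)
      exact le_of_eq (Finset.sum_congr rfl fun j _ => hall j)
    | succ d ihd =>
      intro t hnt g hg hag
      by_cases htn : n ≤ t
      · have hall : ∀ j : Fin n, g j = f j := fun j => hag j (lt_of_lt_of_le j.isLt htn)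
        exact le_of_eq (Finset.sum_congr rfl fun j _ => hall j)
      push_neg at htn
      set i : Fin n := ⟨t, htn⟩ with hidef
      have hit : (i : ℕ) = t := rfl
      have step : ∀ g' : Fin n → ℕ, Pack g' → (∀ j : Fin n, (j : ℕ) < t → g' j = f j) →
          g' i = f i → ∑ j, g' j ≤ ∑ j, f j := by
        intro g' hg' hag' hi
        apply ihd (t + 1) (by omega) g' hg'
        intro j hj
        by_cases hjt : (j : ℕ) < t
        · exact hag' j hjt
        · have hji : j = i := Fin.ext (by omega)
          rw [hji, hi]
      have inner : ∀ c : ℕ, ∀ g' : Fin n → ℕ, Pack g' →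
          (∀ j : Fin n, (j : ℕ) < t → g' j = f j) → f i - g' i ≤ c →
          ∑ j, g' j ≤ ∑ j, f j := by
        intro c
        induction c with
        | zero =>
          intro g' hg' hag' hc
          have hle := gle i g' hg' (fun j hj => hag' j (by simpa [Fin.lt_def, hit] using hj))
          exact step g' hg' hag' (by omega)
        | succ c ihc =>
          intro g' hg' hag' hc
          by_cases hslack : g' i < f i
          · -- exchange step
            set Ts : Finset (Fin n) := Finset.univ.filter
              (fun m => σ i ∈ closedNbhd G (σ m) ∧ ∑ j ∈ Nb m, g' j = k (σ m)) with hTsdef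
            by_cases hT : Ts.Nonempty
            · -- tight constraints exist: exchange unit from l to i
              set m0 := Ts.min' hT with hm0def
              have hm0 := Finset.mem_filter.mp (Ts.min'_mem hT)
              have hm0i : σ i ∈ closedNbhd G (σ m0) := hm0.2.1
              have hm0t : ∑ j ∈ Nb m0, g' j = k (σ m0) := hm0.2.2
              have hiNb0 : i ∈ Nb m0 := hmemNb.mpr hm0i
              have hds := aux_sum_split (Nb m0) i g'
              rw [if_pos hiNb0, hm0t] at hds
              have hPeq : ∑ j ∈ (Nb m0).filter (fun j => j < i), g' j
                  = ∑ j ∈ (Nb m0).filter (fun j => j < i), f j :=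
                Finset.sum_congr rfl fun j hj => hag' j (by
                  have := (Finset.mem_filter.mp hj).2
                  simpa [Fin.lt_def, hit] using this)
              rw [hPeq] at hds
              have hfi := hf_le i (σ m0) ((mem_closedNbhd_comm G).mp hm0i)
              rw [hfilter i m0 f] at hfi
              -- the tail sum R is positive
              have hR : 1 ≤ ∑ j ∈ (Nb m0).filter (fun j => i < j), g' j := by omega
              have hex : ∃ l ∈ (Nb m0).filter (fun j => i < j), 0 < g' l := by
                by_contra hcon
                push_neg at hcon
                have : ∑ j ∈ (Nb m0).filter (fun j => i < j), g' j = 0 :=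
                  Finset.sum_eq_zero fun l hl => by have := hcon l hl; omega
                omega
              obtain ⟨l, hlmem, hgl⟩ := hex
              have hil : i < l := (Finset.mem_filter.mp hlmem).2
              have hlNb0 : l ∈ Nb m0 := (Finset.mem_filter.mp hlmem).1
              have hl0 : σ l ∈ closedNbhd G (σ m0) := hmemNb.mp hlNb0
              have hcover : ∀ m ∈ Ts, σ l ∈ closedNbhd G (σ m) := by
                intro m hm
                have hm' := Finset.mem_filter.mp hm
                have hmi : σ i ∈ closedNbhd G (σ m) := hm'.2.1
                have hm0m : m0 ≤ m := Finset.min'_le Ts m hm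
                have hsm : σ m ∈ closedNbhd G (σ i) := (mem_closedNbhd_comm G).mp hmi
                by_cases hcase : i ≤ m0
                · exact hb i m0 m hcase hm0m ((mem_closedNbhd_comm G).mp hm0i) hsm l
                    (le_of_lt hil) hl0
                · push_neg at hcase
                  exact (mem_closedNbhd_comm G).mp
                    (hb m0 i l (le_of_lt hcase) (le_of_lt hil) hm0i hl0 m hm0m hsm)
              have hne : i ≠ l := ne_of_lt hil
              set g'' := Function.update (Function.update g' i (g' i + 1)) l (g' l - 1)
                with hg''def
              have hup : ∀ S : Finset (Fin n),
                  (∑ j ∈ S, g'' j) + (if l ∈ S then 1 else 0)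
                    = (∑ j ∈ S, g' j) + (if i ∈ S then 1 else 0) :=
                fun S => aux_update2 g' i l hne hgl S
              have hgi'' : g'' i = g' i + 1 := by
                rw [hg''def, Function.update_apply, if_neg hne, Function.update_apply, if_pos rfl]
              have hgl'' : g'' l = g' l - 1 := by
                rw [hg''def, Function.update_apply, if_pos rfl]
              have hother : ∀ j, j ≠ i → j ≠ l → g'' j = g' j := by
                intro j h1 h2
                rw [hg''def, Function.update_apply, if_neg h2, Function.update_apply, if_neg h1]
              have hpack'' : Pack g'' := by
                intro m
                constructor
                · rcases eq_or_ne m i with rfl | h1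
                  · rw [hgi'']
                    have := hf_le_u i
                    omega
                  · rcases eq_or_ne m l with h2 | h2
                    · rw [h2, hgl'']
                      have := (hg' l).1
                      omega
                    · rw [hother m h1 h2]; exact (hg' m).1
                · have h1 := hup (Nb m)
                  have h2 := (hg' m).2
                  by_cases hi : i ∈ Nb m
                  · by_cases htight : m ∈ Ts
                    · have hll : l ∈ Nb m := hmemNb.mpr (hcover m htight)
                      have hk : ∑ j ∈ Nb m, g' j = k (σ m) :=
                        (Finset.mem_filter.mp htight).2.2
                      rw [if_pos hll, if_pos hi, hk] at h1
                      omega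
                    · have hneq : ∑ j ∈ Nb m, g' j ≠ k (σ m) := fun hc =>
                        htight (Finset.mem_filter.mpr ⟨Finset.mem_univ m, hmemNb.mp hi, hc⟩)
                      rw [if_pos hi] at h1
                      split_ifs at h1 <;> omega
                  · rw [if_neg hi] at h1
                    split_ifs at h1 <;> omega
              have htot : ∑ j, g'' j = ∑ j, g' j := by
                have h1 := hup Finset.univ
                simp only [Finset.mem_univ, if_pos] at h1
                omega
              have hag'' : ∀ j : Fin n, (j : ℕ) < t → g'' j = f j := by
                intro j hj
                have h1 : j ≠ i := fun hc => by rw [hc] at hj; omega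
                have h2 : j ≠ l := fun hc => by
                  rw [hc] at hj
                  have : (i : ℕ) < (l : ℕ) := hil
                  omega
                rw [hother j h1 h2]
                exact hag' j hj
              have hslack'' : f i - g'' i ≤ c := by rw [hgi'']; omega
              rw [← htot]
              exact ihc g'' hpack'' hag'' hslack''
            · -- no tight constraint: just increase at i
              set g'' := Function.update g' i (g' i + 1) with hg''def
              have hpt : ∀ j, g'' j = g' j + (if j = i then 1 else 0) := by
                intro j
                by_cases h : j = i
                · rw [hg''def, Function.update_apply, if_pos h, h]; simp
                · simp [hg''def, Function.update_apply, h]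
              have hsum2 : ∀ S : Finset (Fin n),
                  ∑ j ∈ S, g'' j = ∑ j ∈ S, g' j + (if i ∈ S then 1 else 0) := by
                intro S
                rw [Finset.sum_congr rfl (fun j _ => hpt j), Finset.sum_add_distrib,
                  Finset.sum_ite_eq' S i (fun _ => 1)]
              have hgi''2 : g'' i = g' i + 1 := by rw [hpt]; simp
              have hpack'' : Pack g'' := by
                intro m
                constructor
                · rcases eq_or_ne m i with rfl | h1
                  · rw [hgi''2]
                    have := hf_le_u i
                    omega
                  · rw [hpt, if_neg h1]
                    simpa using (hg' m).1
                · rw [hsum2]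
                  have h2 := (hg' m).2
                  by_cases hi : i ∈ Nb m
                  · rw [if_pos hi]
                    have hneq : ∑ j ∈ Nb m, g' j ≠ k (σ m) := fun hc =>
                      hT ⟨m, Finset.mem_filter.mpr ⟨Finset.mem_univ m, hmemNb.mp hi, hc⟩⟩
                    omega
                  · rw [if_neg hi]; omega
              have hag'' : ∀ j : Fin n, (j : ℕ) < t → g'' j = f j := by
                intro j hj
                have h1 : j ≠ i := fun hc => by rw [hc] at hj; omega
                rw [hpt, if_neg h1]
                simpa using hag' j hj
              have hslack'' : f i - g'' i ≤ c := by
                rw [hgi''2]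
                omega
              calc ∑ j, g' j ≤ ∑ j, g'' j :=
                    Finset.sum_le_sum fun j _ => by rw [hpt]; omega
                _ ≤ ∑ j, f j := ihc g'' hpack'' hag'' hslack''
          · push_neg at hslack
            have hle := gle i g' hg' (fun j hj => hag' j (by simpa [Fin.lt_def, hit] using hj))
            exact step g' hg' hag' (le_antisymm hle hslack)
      exact inner (f i) g hg hag (by omega)
  have bound : ∀ g : Fin n → ℕ, Pack g → ∑ j, g j ≤ ∑ j, f j := fun g hg =>
    main n 0 (by omega) g hg (fun j hj => absurd hj (by omega))
  -- conclude
  have hmem : (∑ j, f j) ∈ {s | ∃ fV, IsPackFn G k u fV ∧ s = ∑ v, fV v} := by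
    refine ⟨fun v => f (σ.symm v), ?_, ?_⟩
    · intro v
      have hp := packF (σ.symm v)
      constructor
      · simpa using hp.1
      · have ht2 := htrans (fun v => f (σ.symm v)) v
        rw [ht2]
        simp only [Equiv.symm_apply_apply]
        simpa using hp.2
    · rw [← Equiv.sum_comp σ (fun v => f (σ.symm v))]
      simp
  have hub : ∀ s ∈ {s | ∃ fV, IsPackFn G k u fV ∧ s = ∑ v, fV v}, s ≤ ∑ j, f j := by
    rintro s ⟨fV, hp, rfl⟩
    have hpg : Pack (fun j => fV (σ j)) := by
      intro m
      refine ⟨(hp (σ m)).1, ?_⟩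
      have h2 := (hp (σ m)).2
      rw [htrans fV (σ m)] at h2
      simpa using h2
    calc ∑ v, fV v = ∑ j, fV (σ j) := (Equiv.sum_comp σ fV).symm
      _ ≤ ∑ j, f j := bound _ hpg
  rw [LKU]
  exact le_antisymm (le_csSup ⟨_, hub⟩ hmem) (csSup_le ⟨_, hmem⟩ hub)
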